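/- For every constant α > 0 there exists a constant c > 0 such that for all sufficiently large n and all integers k with 1 < k ≤ n/4, the GSEMO maximizing OJZJ_k, started from any population state in which the population consists entirely of Pareto-optimal individuals, has size at least α·n, and contains neither 0ⁿ nor 1ⁿ, takes in expectation at least c·n^{k+1} objective-function evaluations before the objective values of the population cover the Pareto front of OJZJ_k. -/

import Mathlib

open scoped ENNReal

namespace GSEMOPaper

attribute [local instance] Classical.propDecidable

/-- An individual (bit string) of length `n`. -/
abbrev Individual (n : ℕ) := Fin n → Bool

/-- `u` weakly dominates `v` (maximization, two objectives). -/
def weaklyDom (u v : ℝ × ℝ) : Prop := v.1 ≤ u.1 ∧ v.2 ≤ u.2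

/-- `u` strictly dominates `v`. -/
def strictlyDom (u v : ℝ × ℝ) : Prop := weaklyDom u v ∧ u ≠ v

/-- The Pareto front of a bi-objective function on bit strings. -/
def paretoFront {n : ℕ} (f : Individual n → ℝ × ℝ) : Set (ℝ × ℝ) :=
  {u | ∃ x : Individual n, f x = u ∧ ∀ y : Individual n, ¬ strictlyDom (f y) (f x)}

/-- The objective values of the population `P` cover the Pareto front of `f`. -/
def covers {n : ℕ} (f : Individual n → ℝ × ℝ) (P : Finset (Individual n)) : Prop :=
  paretoFront f ⊆ f '' (P : Set (Individual n))

/-- A valid (G)SEMO population: distinct members are mutually non-dominated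
(in particular they have pairwise distinct objective values). -/
def validPop {n : ℕ} (f : Individual n → ℝ × ℝ) (P : Finset (Individual n)) : Prop :=
  ∀ x ∈ P, ∀ y ∈ P, x ≠ y → ¬ weaklyDom (f x) (f y)

/-- Survival selection of the (G)SEMO: remove all individuals weakly dominated by the
offspring `y`, then insert `y` unless it is strictly dominated by a remaining individual. -/
noncomputable def updatePop {n : ℕ} (f : Individual n → ℝ × ℝ)
    (P : Finset (Individual n)) (y : Individual n) : Finset (Individual n) :=
  let Q := P.filter fun z => ¬ weaklyDom (f y) (f z)
  if ∃ z ∈ Q, strictlyDom (f z) (f y) then Q else insert y Q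

/-- Flip position `i` of `x`. -/
def flipOne {n : ℕ} (x : Individual n) (i : Fin n) : Individual n :=
  Function.update x i (!x i)

/-- One-bit mutation (SEMO): flip exactly one uniformly random position. -/
noncomputable def oneBitMut {n : ℕ} (x : Individual n) : PMF (Individual n) :=
  if h : n = 0 then PMF.pure x
  else
    haveI : Nonempty (Fin n) := ⟨⟨0, Nat.pos_of_ne_zero h⟩⟩
    (PMF.uniformOfFintype (Fin n)).map (flipOne x)

/-- A vector of `m` independent Bernoulli(`p`) bits. -/
noncomputable def bernoulliVec (p : ℝ≥0∞) (hp : p ≤ 1) : (m : ℕ) → PMF (Fin m → Bool)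
  | 0 => PMF.pure fun i => i.elim0
  | m + 1 => (PMF.bernoulli p.toNNReal (by simpa using ENNReal.toNNReal_mono ENNReal.one_ne_top hp)).bind fun b => (bernoulliVec p hp m).map fun v => Fin.cons b v

/-- Standard bit mutation (GSEMO): flip each position independently with probability `1/n`. -/
noncomputable def stdBitMut {n : ℕ} (x : Individual n) : PMF (Individual n) :=
  if h : n = 0 then PMF.pure x
  else
    (bernoulliVec ((n : ℝ≥0∞))⁻¹
        (ENNReal.inv_le_one.mpr (by exact_mod_cast Nat.one_le_iff_ne_zero.mpr h)) n).map
      fun mask => fun j => if mask j then !x j else x j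

/-- One iteration of the (G)SEMO maximizing `f`, with mutation operator `mutOp`:
choose a parent uniformly at random from the population, mutate it, and perform
survival selection. -/
noncomputable def semoStep {n : ℕ} (f : Individual n → ℝ × ℝ)
    (mutOp : Individual n → PMF (Individual n))
    (P : Finset (Individual n)) : PMF (Finset (Individual n)) :=
  if h : P.Nonempty then
    (PMF.uniformOfFinset P h).bind fun x => (mutOp x).map fun y => updatePop f P y
  else PMF.pure P

/-- One iteration of the modified (G)SEMO: choose `i ∈ {0, …, m}` uniformly at random;
if the population contains no individual `z` with `idx z = i`, nothing happens;
otherwise the (unique) such individual is the parent. -/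
noncomputable def modStep {n : ℕ} (f : Individual n → ℝ × ℝ)
    (mutOp : Individual n → PMF (Individual n))
    (idx : Individual n → ℕ) (m : ℕ)
    (P : Finset (Individual n)) : PMF (Finset (Individual n)) :=
  (PMF.uniformOfFintype (Fin (m + 1))).bind fun i =>
    let S := P.filter fun z => idx z = (i : ℕ)
    if h : S.Nonempty then
      (PMF.uniformOfFinset S h).bind fun x => (mutOp x).map fun y => updatePop f P y
    else PMF.pure P

/-- Distribution of the trajectory (list of states, most recent first) of `t` iterations of
the Markov chain with one-step kernel `step`, started in state `s`. The resulting lists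
have length `t + 1` and record the states `P⁽ᵗ⁾, …, P⁽⁰⁾`. -/
noncomputable def run {σ : Type*} [Inhabited σ] (step : σ → PMF σ) (s : σ) : ℕ → PMF (List σ)
  | 0 => PMF.pure [s]
  | t + 1 => (run step s t).bind fun l => (step l.headI).map fun s' => s' :: l

/-- The probability that a sample from `p` lies in the event `E`. -/
noncomputable def prob {α : Type*} (p : PMF α) (E : Set α) : ℝ≥0∞ := p.toOuterMeasure E

/-- The uniform distribution on `{0,1}ⁿ` used for initialization. -/
noncomputable def uniformInit (n : ℕ) : PMF (Individual n) :=
  PMF.uniformOfFintype (Individual n)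

/-- The number of ones of a bit string. -/
def ones {n : ℕ} (x : Individual n) : ℕ :=
  (Finset.univ.filter fun i : Fin n => x i = true).card

/-- The number of zeros of a bit string. -/
def zeros {n : ℕ} (x : Individual n) : ℕ :=
  (Finset.univ.filter fun i : Fin n => x i = false).card

/-- `g₁ x`: the number of ones in the first half (positions `0, …, n/2 - 1`). -/
def g1 {n : ℕ} (x : Individual n) : ℕ :=
  (Finset.univ.filter fun i : Fin n => (i : ℕ) < n / 2 ∧ x i = true).card

/-- `g₂ x`: the number of ones in the second half (positions `n/2, …, n - 1`). -/
def g2 {n : ℕ} (x : Individual n) : ℕ :=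
  (Finset.univ.filter fun i : Fin n => n / 2 ≤ (i : ℕ) ∧ x i = true).card

/-- The COCZ benchmark: `COCZ(x) = (g₁(x) + g₂(x), g₁(x) + n/2 − g₂(x))`. -/
noncomputable def cocz {n : ℕ} (x : Individual n) : ℝ × ℝ :=
  (((g1 x + g2 x : ℕ) : ℝ), (g1 x : ℝ) + (n : ℝ) / 2 - (g2 x : ℝ))

/-- The OneMinMax benchmark: `OMM(x) = (|x|₁, n − |x|₁)`. -/
noncomputable def omm {n : ℕ} (x : Individual n) : ℝ × ℝ :=
  ((ones x : ℝ), (n : ℝ) - (ones x : ℝ))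

/-- The OJZJ benchmark with gap parameter `k`. -/
noncomputable def ojzj (n k : ℕ) (x : Individual n) : ℝ × ℝ :=
  ((if ones x ≤ n - k ∨ x = fun _ => true then ((k + ones x : ℕ) : ℝ)
      else ((n - ones x : ℕ) : ℝ)),
   (if zeros x ≤ n - k ∨ x = fun _ => false then ((k + zeros x : ℕ) : ℝ)
      else ((n - zeros x : ℕ) : ℝ)))


variable {n : ℕ}

lemma ones_add_zeros (x : Individual n) : ones x + zeros x = n := by
  classical
  rw [ones, zeros]
  have h := Finset.card_filter_add_card_filter_not (s := Finset.univ)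
    (p := fun i : Fin n => x i = true)
  rw [Finset.card_fin] at h
  have e : (Finset.filter (fun i : Fin n => x i = false) Finset.univ).card
      = (Finset.filter (fun a : Fin n => ¬ x a = true) Finset.univ).card := by
    apply Finset.card_bij (fun a _ => a) <;> simp +contextual [Bool.not_eq_true]
  rw [e]
  exact h

lemma ones_le (x : Individual n) : ones x ≤ n := by
  have := ones_add_zeros x; omega

lemma eq_allF_of_ones_eq_zero {x : Individual n} (h : ones x = 0) :
    x = fun _ => false := by
  funext i
  by_contra hi
  have : x i = true := by cases hxi : x i <;> simp_all
  have : i ∈ Finset.univ.filter fun j : Fin n => x j = true := by simp [this]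
  have := Finset.card_pos.2 ⟨i, this⟩
  rw [ones] at h; omega

lemma eq_allT_of_zeros_eq_zero {x : Individual n} (h : zeros x = 0) :
    x = fun _ => true := by
  funext i
  by_contra hi
  have : x i = false := by cases hxi : x i <;> simp_all
  have : i ∈ Finset.univ.filter fun j : Fin n => x j = false := by simp [this]
  have := Finset.card_pos.2 ⟨i, this⟩
  rw [zeros] at h; omega

lemma ones_allF : ones (fun _ => false : Individual n) = 0 := by simp [ones]

lemma ones_allT : ones (fun _ => true : Individual n) = n := by simp [ones]

lemma zeros_allF : zeros (fun _ => false : Individual n) = n := by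
  have := ones_add_zeros (fun _ => false : Individual n); rw [ones_allF] at this; omega

lemma zeros_allT : zeros (fun _ => true : Individual n) = 0 := by
  have := ones_add_zeros (fun _ => true : Individual n); rw [ones_allT] at this; omega

lemma ojzj_inner {k : ℕ} {x : Individual n} (h1 : k ≤ ones x) (h2 : ones x ≤ n - k) :
    ojzj n k x = (((k + ones x : ℕ) : ℝ), ((k + (n - ones x) : ℕ) : ℝ)) := by
  have hz := ones_add_zeros x
  rw [ojzj, if_pos (Or.inl h2), if_pos (Or.inl (by omega : zeros x ≤ n - k))]
  have : zeros x = n - ones x := by omega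
  rw [this]

lemma ojzj_low {k : ℕ} {x : Individual n} (hkn : 2 * k ≤ n)
    (h0 : 0 < ones x) (h1 : ones x < k) :
    ojzj n k x = (((k + ones x : ℕ) : ℝ), ((ones x : ℕ) : ℝ)) := by
  have hz := ones_add_zeros x
  rw [ojzj, if_pos (Or.inl (by omega : ones x ≤ n - k)), if_neg, show n - zeros x = ones x by omega]
  rintro (h | h)
  · omega
  · rw [h, ones_allF] at h0; omega

lemma ojzj_high {k : ℕ} {x : Individual n} (hkn : 2 * k ≤ n)
    (h0 : 0 < zeros x) (h1 : zeros x < k) :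
    ojzj n k x = (((zeros x : ℕ) : ℝ), ((k + zeros x : ℕ) : ℝ)) := by
  have hz := ones_add_zeros x
  rw [ojzj, if_neg, if_pos (Or.inl (by omega : zeros x ≤ n - k)), show n - ones x = zeros x by omega]
  rintro (h | h)
  · omega
  · rw [h, zeros_allT] at h0; omega

lemma ojzj_allF {k : ℕ} (hk : k ≤ n) :
    ojzj n k (fun _ => false : Individual n) = (((k : ℕ) : ℝ), ((k + n : ℕ) : ℝ)) := by
  have h1 : ones (fun _ => false : Individual n) = 0 := ones_allF
  have h2 : zeros (fun _ => false : Individual n) = n := by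
    have := ones_add_zeros (fun _ => false : Individual n); omega
  rw [ojzj, if_pos (Or.inl (by omega)), if_pos (Or.inr rfl), h1, h2]; norm_num

lemma ojzj_allT {k : ℕ} (hk : k ≤ n) :
    ojzj n k (fun _ => true : Individual n) = (((k + n : ℕ) : ℝ), ((k : ℕ) : ℝ)) := by
  have h1 : ones (fun _ => true : Individual n) = n := ones_allT
  have h2 : zeros (fun _ => true : Individual n) = 0 := by
    have := ones_add_zeros (fun _ => true : Individual n); omega
  rw [ojzj, if_pos (Or.inr rfl), if_pos (Or.inl (by omega)), h1, h2]; norm_num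

/-- Classification of individuals. -/
lemma classify {k : ℕ} (hkn : 2 * k ≤ n) (x : Individual n) :
    x = (fun _ => false) ∨ x = (fun _ => true) ∨
    (0 < ones x ∧ ones x < k) ∨ (0 < zeros x ∧ zeros x < k) ∨
    (k ≤ ones x ∧ ones x ≤ n - k) := by
  have hz := ones_add_zeros x
  by_cases h0 : ones x = 0
  · exact Or.inl (eq_allF_of_ones_eq_zero h0)
  by_cases h1 : zeros x = 0
  · exact Or.inr (Or.inl (eq_allT_of_zeros_eq_zero h1))
  by_cases h2 : ones x < k
  · exact Or.inr (Or.inr (Or.inl ⟨by omega, h2⟩))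
  by_cases h3 : zeros x < k
  · exact Or.inr (Or.inr (Or.inr (Or.inl ⟨by omega, h3⟩)))
  · exact Or.inr (Or.inr (Or.inr (Or.inr ⟨by omega, by omega⟩)))


/-- The invariant maintained by the GSEMO population. -/
def Inv (n k m₀ : ℕ) (Q : Finset (Individual n)) : Prop :=
  (∀ x ∈ Q, k ≤ ones x ∧ ones x ≤ n - k) ∧
  (∀ x ∈ Q, ∀ y ∈ Q, ones x = ones y → x = y) ∧
  m₀ ≤ Q.card

lemma exists_ones_eq (t : ℕ) (ht : t ≤ n) : ∃ x : Individual n, ones x = t := by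
  rcases eq_or_lt_of_le ht with h | h
  · exact ⟨fun _ => true, by rw [ones_allT, h]⟩
  · refine ⟨fun i => decide ((i : ℕ) < t), ?_⟩
    rw [ones]
    have : (Finset.univ.filter fun i : Fin n => (decide ((i : ℕ) < t)) = true)
        = Finset.Iio (⟨t, h⟩ : Fin n) := by
      ext i
      simp [Fin.lt_def]
    rw [this, Fin.card_Iio]

lemma updatePop_inv {k m₀ : ℕ} (hk : 1 ≤ k) (h2k : 2 * k ≤ n) (hm : 1 ≤ m₀)
    {Q : Finset (Individual n)} (hQ : Inv n k m₀ Q) (y : Individual n)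
    (hy0 : y ≠ fun _ => false) (hy1 : y ≠ fun _ => true) :
    Inv n k m₀ (updatePop (ojzj n k) Q y) := by
  obtain ⟨hinner, hinj, hcard⟩ := hQ
  have hQne : Q.Nonempty := Finset.card_pos.1 (lt_of_lt_of_le hm hcard)
  have hyz := ones_add_zeros y
  rcases classify h2k y with h | h | ⟨hy0', hy1'⟩ | ⟨hy0', hy1'⟩ | ⟨hylo, hyhi⟩
  · exact absurd h hy0
  · exact absurd h hy1
  · -- low gap offspring: population unchanged
    have hfy := ojzj_low h2k hy0' hy1'
    have hfilter : (Q.filter fun z => ¬ weaklyDom (ojzj n k y) (ojzj n k z)) = Q := by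
      apply Finset.filter_true_of_mem
      intro z hz
      obtain ⟨hz1, hz2⟩ := hinner z hz
      rw [hfy, ojzj_inner hz1 hz2]
      rintro ⟨h1, -⟩
      have h1' : ((k + ones z : ℕ) : ℝ) ≤ ((k + ones y : ℕ) : ℝ) := h1
      have : k + ones z ≤ k + ones y := by exact_mod_cast h1'
      omega
    obtain ⟨z, hz⟩ := hQne
    obtain ⟨hz1, hz2⟩ := hinner z hz
    rw [updatePop]
    simp only [hfilter]
    rw [if_pos]
    · exact ⟨hinner, hinj, hcard⟩
    · refine ⟨z, hz, ⟨?_, ?_⟩, ?_⟩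
      · rw [hfy, ojzj_inner hz1 hz2]
        exact Nat.cast_le.2 (by omega)
      · rw [hfy, ojzj_inner hz1 hz2]
        exact Nat.cast_le.2 (by omega)
      · rw [hfy, ojzj_inner hz1 hz2]
        intro hcontra
        have h' : ((k + ones z : ℕ) : ℝ) = ((k + ones y : ℕ) : ℝ) := congrArg Prod.fst hcontra
        have : k + ones z = k + ones y := by exact_mod_cast h'
        omega
  · -- high gap offspring: population unchanged
    have hfy := ojzj_high h2k hy0' hy1'
    have hfilter : (Q.filter fun z => ¬ weaklyDom (ojzj n k y) (ojzj n k z)) = Q := by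
      apply Finset.filter_true_of_mem
      intro z hz
      obtain ⟨hz1, hz2⟩ := hinner z hz
      rw [hfy, ojzj_inner hz1 hz2]
      rintro ⟨h1, -⟩
      have h1' : ((k + ones z : ℕ) : ℝ) ≤ ((zeros y : ℕ) : ℝ) := h1
      have : k + ones z ≤ zeros y := by exact_mod_cast h1'
      omega
    obtain ⟨z, hz⟩ := hQne
    obtain ⟨hz1, hz2⟩ := hinner z hz
    have hzn := ones_add_zeros z
    rw [updatePop]
    simp only [hfilter]
    rw [if_pos]
    · exact ⟨hinner, hinj, hcard⟩
    · refine ⟨z, hz, ⟨?_, ?_⟩, ?_⟩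
      · rw [hfy, ojzj_inner hz1 hz2]
        exact Nat.cast_le.2 (by omega)
      · rw [hfy, ojzj_inner hz1 hz2]
        exact Nat.cast_le.2 (by omega)
      · rw [hfy, ojzj_inner hz1 hz2]
        intro hcontra
        have h' : ((k + ones z : ℕ) : ℝ) = ((zeros y : ℕ) : ℝ) := congrArg Prod.fst hcontra
        have : k + ones z = zeros y := by exact_mod_cast h'
        omega
  · -- inner offspring
    have hfy := ojzj_inner hylo hyhi
    have hfilter : (Q.filter fun z => ¬ weaklyDom (ojzj n k y) (ojzj n k z))
        = Q.filter fun z => ones z ≠ ones y := by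
      apply Finset.filter_congr
      intro z hz
      obtain ⟨hz1, hz2⟩ := hinner z hz
      rw [hfy, ojzj_inner hz1 hz2]
      constructor
      · intro hw hne
        apply hw
        rw [hne]
        exact ⟨le_refl _, le_refl _⟩
      · rintro hne ⟨h1, h2⟩
        apply hne
        have h1' : ((k + ones z : ℕ) : ℝ) ≤ ((k + ones y : ℕ) : ℝ) := h1
        have h2' : ((k + (n - ones z) : ℕ) : ℝ) ≤ ((k + (n - ones y) : ℕ) : ℝ) := h2
        have e1 : k + ones z ≤ k + ones y := by exact_mod_cast h1'
        have e2 : k + (n - ones z) ≤ k + (n - ones y) := by exact_mod_cast h2'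
        omega
    have hynot : y ∉ Q.filter fun z => ones z ≠ ones y := by
      intro h
      exact (Finset.mem_filter.1 h).2 rfl
    rw [updatePop]
    simp only [hfilter]
    rw [if_neg]
    · constructor
      · intro x hx
        rcases Finset.mem_insert.1 hx with rfl | hx'
        · exact ⟨hylo, hyhi⟩
        · exact hinner x (Finset.mem_filter.1 hx').1
      constructor
      · intro x hx x' hx' hoo
        rcases Finset.mem_insert.1 hx with rfl | hx1 <;>
          rcases Finset.mem_insert.1 hx' with h2 | hx2
        · rw [h2]
        · exact absurd hoo.symm (Finset.mem_filter.1 hx2).2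
        · exact absurd (h2 ▸ hoo) (Finset.mem_filter.1 hx1).2
        · exact hinj x (Finset.mem_filter.1 hx1).1 x' (Finset.mem_filter.1 hx2).1 hoo
      · rw [Finset.card_insert_of_notMem hynot]
        have hsplit := Finset.card_filter_add_card_filter_not
          (s := Q) (p := fun z => ones z = ones y)
        have hone : (Q.filter fun z => ones z = ones y).card ≤ 1 := by
          apply Finset.card_le_one.2
          intro a ha b hb
          have ha' := Finset.mem_filter.1 ha
          have hb' := Finset.mem_filter.1 hb
          exact hinj a ha'.1 b hb'.1 (ha'.2.trans hb'.2.symm)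
        have he : (Q.filter fun z => ones z ≠ ones y).card
            = (Q.filter fun z => ¬ ones z = ones y).card := rfl
        omega
    · rintro ⟨z, hzmem, ⟨h1, h2⟩, hne⟩
      have hz' := Finset.mem_filter.1 hzmem
      obtain ⟨hz1, hz2⟩ := hinner z hz'.1
      rw [hfy, ojzj_inner hz1 hz2] at h1 h2
      have h1' : ((k + ones y : ℕ) : ℝ) ≤ ((k + ones z : ℕ) : ℝ) := h1
      have h2' : ((k + (n - ones y) : ℕ) : ℝ) ≤ ((k + (n - ones z) : ℕ) : ℝ) := h2
      have e1 : k + ones y ≤ k + ones z := by exact_mod_cast h1'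
      have e2 : k + (n - ones y) ≤ k + (n - ones z) := by exact_mod_cast h2'
      exact hz'.2 (by omega)

lemma inv_not_covers {k m₀ : ℕ} (hk : 2 ≤ k) (h2k : 2 * k ≤ n) (hn : 0 < n) (hm : 1 ≤ m₀)
    {Q : Finset (Individual n)} (hQ : Inv n k m₀ Q) : ¬ covers (ojzj n k) Q := by
  obtain ⟨hinner, _, _⟩ := hQ
  intro hcov
  have hkn : k ≤ n := by omega
  have hmem : (((k : ℕ) : ℝ), ((k + n : ℕ) : ℝ)) ∈ paretoFront (ojzj n k) := by
    refine ⟨fun _ => false, ojzj_allF hkn, ?_⟩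
    rintro y ⟨⟨h1, h2⟩, hne⟩
    rw [ojzj_allF hkn] at h2 hne
    have hyz := ones_add_zeros y
    rcases classify h2k y with h | h | ⟨hy0', hy1'⟩ | ⟨hy0', hy1'⟩ | ⟨hylo, hyhi⟩
    · rw [h, ojzj_allF hkn] at hne
      exact hne rfl
    · rw [h, ojzj_allT hkn] at h2
      have h2' : ((k + n : ℕ) : ℝ) ≤ ((k : ℕ) : ℝ) := h2
      have : k + n ≤ k := by exact_mod_cast h2'
      omega
    · rw [ojzj_low h2k hy0' hy1'] at h2
      have h2' : ((k + n : ℕ) : ℝ) ≤ ((ones y : ℕ) : ℝ) := h2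
      have : k + n ≤ ones y := by exact_mod_cast h2'
      omega
    · rw [ojzj_high h2k hy0' hy1'] at h2
      have h2' : ((k + n : ℕ) : ℝ) ≤ ((k + zeros y : ℕ) : ℝ) := h2
      have : k + n ≤ k + zeros y := by exact_mod_cast h2'
      omega
    · rw [ojzj_inner hylo hyhi] at h2
      have h2' : ((k + n : ℕ) : ℝ) ≤ ((k + (n - ones y) : ℕ) : ℝ) := h2
      have : k + n ≤ k + (n - ones y) := by exact_mod_cast h2'
      omega
  obtain ⟨z, hzQ, hfz⟩ := hcov hmem
  obtain ⟨hz1, hz2⟩ := hinner z hzQ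
  rw [ojzj_inner hz1 hz2] at hfz
  have : ((k + ones z : ℕ) : ℝ) = ((k : ℕ) : ℝ) := congrArg Prod.fst hfz
  have : k + ones z = k := by exact_mod_cast this
  omega

lemma initial_inv {k : ℕ} (hk : 1 < k) (hkn : 4 * k ≤ n)
    {P : Finset (Individual n)} (hvalid : validPop (ojzj n k) P)
    (hpar : ∀ x ∈ P, ojzj n k x ∈ paretoFront (ojzj n k))
    (h0 : (fun _ => false : Individual n) ∉ P) (h1 : (fun _ => true : Individual n) ∉ P) :
    Inv n k P.card P := by
  have h2k : 2 * k ≤ n := by omega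
  have hinner : ∀ x ∈ P, k ≤ ones x ∧ ones x ≤ n - k := by
    intro x hx
    have hxz := ones_add_zeros x
    rcases classify h2k x with h | h | ⟨hx0', hx1'⟩ | ⟨hx0', hx1'⟩ | hinner
    · exact absurd (h ▸ hx) h0
    · exact absurd (h ▸ hx) h1
    · -- low gap: contradicts Pareto optimality
      exfalso
      obtain ⟨w, hw⟩ := exists_ones_eq (n := n) k (by omega)
      obtain ⟨x', hx'eq, hx'opt⟩ := hpar x hx
      apply hx'opt w
      rw [hx'eq, ojzj_low h2k hx0' hx1', ojzj_inner (le_of_eq hw.symm) (by omega), hw]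
      refine ⟨⟨?_, ?_⟩, ?_⟩
      · exact Nat.cast_le.2 (by omega)
      · exact Nat.cast_le.2 (by omega)
      · intro hcontra
        have h' : ((k + k : ℕ) : ℝ) = ((k + ones x : ℕ) : ℝ) := congrArg Prod.fst hcontra
        have : k + k = k + ones x := by exact_mod_cast h'
        omega
    · exfalso
      obtain ⟨w, hw⟩ := exists_ones_eq (n := n) (n - k) (by omega)
      obtain ⟨x', hx'eq, hx'opt⟩ := hpar x hx
      apply hx'opt w
      rw [hx'eq, ojzj_high h2k hx0' hx1', ojzj_inner (by omega : k ≤ ones w) (le_of_eq hw), hw]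
      refine ⟨⟨?_, ?_⟩, ?_⟩
      · exact Nat.cast_le.2 (by omega)
      · exact Nat.cast_le.2 (by omega)
      · intro hcontra
        have h' : ((k + (n - k) : ℕ) : ℝ) = ((zeros x : ℕ) : ℝ) := congrArg Prod.fst hcontra
        have : k + (n - k) = zeros x := by exact_mod_cast h'
        omega
    · exact hinner
  refine ⟨hinner, ?_, le_refl _⟩
  intro x hx y hy hoo
  by_contra hne
  apply hvalid x hx y hy hne
  obtain ⟨hx1, hx2⟩ := hinner x hx
  obtain ⟨hy1, hy2⟩ := hinner y hy
  rw [ojzj_inner hx1 hx2, ojzj_inner hy1 hy2, hoo]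
  exact ⟨le_refl _, le_refl _⟩

lemma bernoulliVec_apply (p : ℝ≥0∞) (hp : p ≤ 1) (m : ℕ) :
    ∀ v : Fin m → Bool, bernoulliVec p hp m v = ∏ i, (if v i then p else 1 - p) := by
  induction m with
  | zero =>
    intro v
    rw [bernoulliVec, PMF.pure_apply, if_pos (funext fun i => i.elim0)]
    simp
  | succ m ih =>
    intro v
    rw [bernoulliVec, PMF.bind_apply]
    have hmap : ∀ b : Bool, ((bernoulliVec p hp m).map fun w => Fin.cons b w) v
        = if v 0 = b then bernoulliVec p hp m (Fin.tail v) else 0 := by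
      intro b
      rw [PMF.map_apply]
      rcases eq_or_ne (v 0) b with hb | hb
      · rw [if_pos hb, tsum_eq_single (Fin.tail v)]
        · rw [if_pos (by rw [← hb, Fin.cons_self_tail])]
        · intro w hw
          rw [if_neg]
          intro hc
          exact hw (by rw [hc, Fin.tail_cons])
      · rw [if_neg hb]
        refine ENNReal.tsum_eq_zero.2 fun w => ?_
        rw [if_neg]
        intro hc
        exact hb (by rw [hc, Fin.cons_zero])
    have hprod : (∏ i : Fin (m+1), (if v i then p else 1 - p))
        = (if v 0 then p else 1 - p) * ∏ i : Fin m, (if Fin.tail v i then p else 1 - p) := by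
      rw [Fin.prod_univ_succ]
      rfl
    rw [tsum_fintype, Fintype.sum_bool, hmap false, hmap true]
    erw [PMF.bernoulli_apply, PMF.bernoulli_apply]
    rw [hprod, ih (Fin.tail v)]
    cases h0 : v 0 <;> simp [h0, ENNReal.coe_sub, ENNReal.coe_toNNReal (ne_top_of_le_ne_top ENNReal.one_ne_top hp)]

lemma stdBitMut_apply_allF {n : ℕ} (hn : n ≠ 0) (x : Individual n) :
    stdBitMut x (fun _ => false) = ∏ i, (if x i then ((n : ℝ≥0∞))⁻¹ else 1 - ((n : ℝ≥0∞))⁻¹) := by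
  rw [stdBitMut, dif_neg hn, PMF.map_apply]
  rw [tsum_eq_single x]
  · rw [if_pos, bernoulliVec_apply]
    funext j
    cases hx : x j <;> simp [hx]
  · intro mask hmask
    rw [if_neg]
    intro hc
    apply hmask
    funext j
    have := congrFun hc j
    cases hm : mask j <;> cases hx : x j <;> simp [hm, hx] at this ⊢
  
lemma stdBitMut_apply_allT {n : ℕ} (hn : n ≠ 0) (x : Individual n) :
    stdBitMut x (fun _ => true) = ∏ i, (if x i then 1 - ((n : ℝ≥0∞))⁻¹ else ((n : ℝ≥0∞))⁻¹) := by
  rw [stdBitMut, dif_neg hn, PMF.map_apply]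
  rw [tsum_eq_single (fun j => !x j)]
  · rw [if_pos, bernoulliVec_apply]
    · apply Finset.prod_congr rfl
      intro i _
      cases hx : x i <;> simp [hx]
    · funext j
      cases hx : x j <;> simp [hx]
  · intro mask hmask
    rw [if_neg]
    intro hc
    apply hmask
    funext j
    have := congrFun hc j
    cases hm : mask j <;> cases hx : x j <;> simp [hm, hx] at this ⊢

lemma stdBitMut_allF_le {n : ℕ} (hn : n ≠ 0) (x : Individual n) :
    stdBitMut x (fun _ => false) ≤ ((n : ℝ≥0∞))⁻¹ ^ ones x := by
  rw [stdBitMut_apply_allF hn]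
  calc (∏ i, (if x i then ((n : ℝ≥0∞))⁻¹ else 1 - ((n : ℝ≥0∞))⁻¹))
      ≤ ∏ i, (if x i then ((n : ℝ≥0∞))⁻¹ else 1) := by
        apply Finset.prod_le_prod'
        intro i _
        cases hx : x i <;> simp [hx, tsub_le_self]
    _ = ((n : ℝ≥0∞))⁻¹ ^ ones x := by
        rw [Finset.prod_ite, Finset.prod_const, Finset.prod_const, one_pow, mul_one, ones]

lemma stdBitMut_allT_le {n : ℕ} (hn : n ≠ 0) (x : Individual n) :
    stdBitMut x (fun _ => true) ≤ ((n : ℝ≥0∞))⁻¹ ^ zeros x := by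
  rw [stdBitMut_apply_allT hn]
  calc (∏ i, (if x i then 1 - ((n : ℝ≥0∞))⁻¹ else ((n : ℝ≥0∞))⁻¹))
      ≤ ∏ i, (if x i then 1 else ((n : ℝ≥0∞))⁻¹) := by
        apply Finset.prod_le_prod'
        intro i _
        cases hx : x i <;> simp [hx, tsub_le_self]
    _ = ((n : ℝ≥0∞))⁻¹ ^ zeros x := by
        rw [Finset.prod_ite, Finset.prod_const, Finset.prod_const, one_pow, one_mul, zeros]
        congr 1
        apply Finset.card_bij (fun a _ => a) <;> simp +contextual [Bool.not_eq_true]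

lemma sum_pow_le {n k : ℕ} (hn : 2 ≤ n) {Q : Finset (Individual n)} (g : Individual n → ℕ)
    (hg : ∀ x ∈ Q, k ≤ g x) (hinj : ∀ x ∈ Q, ∀ y ∈ Q, g x = g y → x = y) :
    ∑ x ∈ Q, ((n : ℝ≥0∞))⁻¹ ^ g x ≤ 2 * ((n : ℝ≥0∞))⁻¹ ^ k := by
  set r : ℝ≥0∞ := ((n : ℝ≥0∞))⁻¹ with hr
  calc ∑ x ∈ Q, r ^ g x = r ^ k * ∑ x ∈ Q, r ^ (g x - k) := by
        rw [Finset.mul_sum]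
        refine Finset.sum_congr rfl fun x hx => ?_
        rw [← pow_add]
        congr 1
        have := hg x hx
        omega
    _ ≤ r ^ k * ∑' j : ℕ, r ^ j := by
        apply mul_le_mul_right
        have he : ∑ x ∈ Q, r ^ (g x - k) = ∑ j ∈ Q.image (fun x => g x - k), r ^ j := by
          rw [Finset.sum_image]
          intro x hx y hy hxy
          exact hinj x hx y hy (by have := hg x hx; have := hg y hy; simp only at hxy; omega)
        rw [he]
        exact ENNReal.sum_le_tsum _
    _ ≤ r ^ k * 2 := by
        apply mul_le_mul_right
        rw [ENNReal.tsum_geometric]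
        have hr2 : r ≤ 2⁻¹ := by
          rw [hr]
          exact ENNReal.inv_le_inv.2 (by exact_mod_cast hn)
        have h12 : (1 : ℝ≥0∞) - 2⁻¹ = 2⁻¹ := by
          rw [← ENNReal.inv_two_add_inv_two, ENNReal.add_sub_cancel_right (by norm_num)]
        calc (1 - r)⁻¹ ≤ ((2 : ℝ≥0∞)⁻¹)⁻¹ := by
              apply ENNReal.inv_le_inv.2
              rw [← h12]
              exact tsub_le_tsub_left hr2 1
          _ = 2 := inv_inv 2
    _ = 2 * r ^ k := mul_comm _ _

lemma semoStep_bad_le {n k m₀ : ℕ} (hk : 1 ≤ k) (h2k : 2 * k ≤ n) (hn2 : 2 ≤ n) (hm : 1 ≤ m₀)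
    {Q : Finset (Individual n)} (hQ : Inv n k m₀ Q) :
    prob (semoStep (ojzj n k) stdBitMut Q) {Q' | ¬ Inv n k m₀ Q'}
      ≤ (m₀ : ℝ≥0∞)⁻¹ * (4 * ((n : ℝ≥0∞))⁻¹ ^ k) := by
  obtain ⟨hinner, hinj, hcard⟩ := hQ
  set r : ℝ≥0∞ := ((n : ℝ≥0∞))⁻¹ with hr
  have hQne : Q.Nonempty := Finset.card_pos.1 (lt_of_lt_of_le hm hcard)
  have hn0 : n ≠ 0 := by omega
  rw [prob, semoStep, dif_pos hQne, PMF.toOuterMeasure_bind_apply]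
  have hterm : ∀ x : Individual n, (PMF.uniformOfFinset Q hQne) x *
      ((stdBitMut x).map (fun y => updatePop (ojzj n k) Q y)).toOuterMeasure
        {Q' | ¬ Inv n k m₀ Q'}
      ≤ (if x ∈ Q then (Q.card : ℝ≥0∞)⁻¹ * (r ^ ones x + r ^ zeros x) else 0) := by
    intro x
    by_cases hx : x ∈ Q
    · rw [if_pos hx]
      apply mul_le_mul'
      · rw [PMF.uniformOfFinset_apply, if_pos hx]
      · rw [PMF.toOuterMeasure_map_apply]
        have hsub : (fun y => updatePop (ojzj n k) Q y) ⁻¹' {Q' | ¬ Inv n k m₀ Q'}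
            ⊆ {(fun _ => false : Individual n), (fun _ => true : Individual n)} := by
          intro y hy
          by_contra hyn
          simp only [Set.mem_insert_iff, Set.mem_singleton_iff, not_or] at hyn
          exact hy (updatePop_inv hk h2k hm ⟨hinner, hinj, hcard⟩ y hyn.1 hyn.2)
        calc (stdBitMut x).toOuterMeasure
              ((fun y => updatePop (ojzj n k) Q y) ⁻¹' {Q' | ¬ Inv n k m₀ Q'})
            ≤ (stdBitMut x).toOuterMeasure
              {(fun _ => false : Individual n), (fun _ => true : Individual n)} :=
              (stdBitMut x).toOuterMeasure.mono hsub
          _ ≤ (stdBitMut x).toOuterMeasure {(fun _ => false : Individual n)}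
              + (stdBitMut x).toOuterMeasure {(fun _ => true : Individual n)} := by
              rw [Set.insert_eq]
              exact MeasureTheory.measure_union_le _ _
          _ ≤ r ^ ones x + r ^ zeros x := by
              rw [PMF.toOuterMeasure_apply_singleton, PMF.toOuterMeasure_apply_singleton]
              exact add_le_add (stdBitMut_allF_le hn0 x) (stdBitMut_allT_le hn0 x)
    · rw [if_neg hx, PMF.uniformOfFinset_apply, if_neg hx, zero_mul]
  calc ∑' x, (PMF.uniformOfFinset Q hQne) x *
        ((stdBitMut x).map (fun y => updatePop (ojzj n k) Q y)).toOuterMeasure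
          {Q' | ¬ Inv n k m₀ Q'}
      ≤ ∑' x, (if x ∈ Q then (Q.card : ℝ≥0∞)⁻¹ * (r ^ ones x + r ^ zeros x) else 0) :=
        ENNReal.tsum_le_tsum hterm
    _ = ∑ x ∈ Q, (Q.card : ℝ≥0∞)⁻¹ * (r ^ ones x + r ^ zeros x) := by
        rw [tsum_eq_sum (s := Q) (fun x hx => if_neg hx)]
        exact Finset.sum_congr rfl fun x hx => if_pos hx
    _ = (Q.card : ℝ≥0∞)⁻¹ * ∑ x ∈ Q, (r ^ ones x + r ^ zeros x) := by rw [Finset.mul_sum]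
    _ ≤ (m₀ : ℝ≥0∞)⁻¹ * (2 * r ^ k + 2 * r ^ k) := by
        apply mul_le_mul'
        · exact ENNReal.inv_le_inv.2 (Nat.cast_le.2 hcard)
        · rw [Finset.sum_add_distrib]
          refine add_le_add (sum_pow_le hn2 ones (fun x hx => (hinner x hx).1) hinj) ?_
          refine sum_pow_le hn2 zeros (fun x hx => ?_) (fun x hx y hy hzz => ?_)
          · have := ones_add_zeros x
            have := (hinner x hx).2
            omega
          · refine hinj x hx y hy ?_
            have := ones_add_zeros x
            have := ones_add_zeros y
            omega
    _ = (m₀ : ℝ≥0∞)⁻¹ * (4 * r ^ k) := by ring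

lemma run_inv_ge {n k m₀ : ℕ} {P : Finset (Individual n)}
    (hP : Inv n k m₀ P) (p₀ : ℝ≥0∞)
    (hstep : ∀ Q : Finset (Individual n), Inv n k m₀ Q →
      prob (semoStep (ojzj n k) stdBitMut Q) {Q' | ¬ Inv n k m₀ Q'} ≤ p₀)
    (t : ℕ) :
    1 - t * p₀ ≤ prob (run (semoStep (ojzj n k) stdBitMut) P t)
      {l | l ≠ [] ∧ ∀ Q ∈ l, Inv n k m₀ Q} := by
  set A : Set (List (Finset (Individual n))) := {l | l ≠ [] ∧ ∀ Q ∈ l, Inv n k m₀ Q} with hA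
  set step := semoStep (ojzj n k) stdBitMut with hstepdef
  induction t with
  | zero =>
    have h1 : prob (run step P 0) A = 1 := by
      rw [run, prob, PMF.toOuterMeasure_apply_eq_one_iff, PMF.support_pure]
      intro l hl
      rw [Set.mem_singleton_iff] at hl
      subst hl
      exact ⟨by simp, fun Q hQ => by rw [List.mem_singleton] at hQ; exact hQ ▸ hP⟩
    rw [h1]
    simp
  | succ t ih =>
    rw [run, prob, PMF.toOuterMeasure_bind_apply]
    have key : ∀ l : List (Finset (Individual n)),
        Set.indicator A (run step P t) l * (1 - p₀) ≤
        (run step P t) l * ((step l.headI).map (fun s' => s' :: l)).toOuterMeasure A := by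
      intro l
      by_cases hl : l ∈ A
      · rw [Set.indicator_of_mem hl]
        apply mul_le_mul_right
        rw [PMF.toOuterMeasure_map_apply]
        obtain ⟨a, l', rfl⟩ := List.exists_cons_of_ne_nil hl.1
        have hInva : Inv n k m₀ (a :: l').headI := hl.2 a List.mem_cons_self
        have hsub : {Q' : Finset (Individual n) | Inv n k m₀ Q'}
            ⊆ (fun s' => s' :: (a :: l')) ⁻¹' A := by
          intro Q' hQ'
          refine ⟨by simp, fun Q hQmem => ?_⟩
          rcases List.mem_cons.1 hQmem with rfl | h
          · exact hQ'
          · exact hl.2 Q h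
        have huniv : (step (a :: l').headI).toOuterMeasure Set.univ = 1 := by
          rw [PMF.toOuterMeasure_apply_eq_one_iff]
          exact Set.subset_univ _
        have hsplit : (1 : ℝ≥0∞) ≤
            (step (a :: l').headI).toOuterMeasure {Q' | Inv n k m₀ Q'}
            + (step (a :: l').headI).toOuterMeasure {Q' | ¬ Inv n k m₀ Q'} := by
          rw [← huniv]
          have hu : (Set.univ : Set (Finset (Individual n)))
              = {Q' | Inv n k m₀ Q'} ∪ {Q' | ¬ Inv n k m₀ Q'} := by
            ext z
            simp [em]
          rw [hu]
          exact MeasureTheory.measure_union_le _ _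
        have hge : 1 - p₀ ≤ (step (a :: l').headI).toOuterMeasure {Q' | Inv n k m₀ Q'} := by
          rw [tsub_le_iff_right]
          calc (1 : ℝ≥0∞) ≤ _ + _ := hsplit
            _ ≤ (step (a :: l').headI).toOuterMeasure {Q' | Inv n k m₀ Q'} + p₀ :=
              add_le_add_right (hstep _ hInva) _
        exact le_trans hge ((step (a :: l').headI).toOuterMeasure.mono hsub)
      · rw [Set.indicator_of_notMem hl, zero_mul]
        exact zero_le
    have hchain : (1 - t * p₀) * (1 - p₀) ≤
        ∑' l, (run step P t) l * ((step l.headI).map (fun s' => s' :: l)).toOuterMeasure A := by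
      calc (1 - t * p₀) * (1 - p₀)
          ≤ prob (run step P t) A * (1 - p₀) := mul_le_mul_left ih _
        _ = ∑' l, Set.indicator A (run step P t) l * (1 - p₀) := by
            rw [prob, PMF.toOuterMeasure_apply, ENNReal.tsum_mul_right]
        _ ≤ _ := ENNReal.tsum_le_tsum key
    refine le_trans ?_ hchain
    have hfin : (1 : ℝ≥0∞) - t * p₀ ≠ ⊤ :=
      ne_top_of_le_ne_top ENNReal.one_ne_top tsub_le_self
    have hmulsub : (1 - t * p₀) * (1 - p₀) = (1 - t * p₀) - (1 - t * p₀) * p₀ := by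
      rw [ENNReal.mul_sub (fun _ _ => hfin), mul_one]
    rw [hmulsub]
    have h1 : ((t + 1 : ℕ) : ℝ≥0∞) * p₀ = t * p₀ + p₀ := by
      push_cast
      ring
    rw [h1, ← tsub_tsub]
    apply tsub_le_tsub_left
    calc (1 - t * p₀) * p₀ ≤ 1 * p₀ := mul_le_mul_left tsub_le_self _
      _ = p₀ := one_mul _

/-- For every constant `α > 0` there exists `c > 0` such that for all
sufficiently large `n` and all integers `1 < k ≤ n/4`, the GSEMO maximizing `OJZJ_k`,
started from any population state consisting entirely of Pareto-optimal individuals, of size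
at least `α·n`, containing neither `0ⁿ` nor `1ⁿ`, needs in expectation (one evaluation per
iteration, computed via the tail-sum formula) at least `c·n^{k+1}` objective-function
evaluations before the population covers the Pareto front. -/
theorem gsemo_ojzj_idealized_lower_bound (α : ℝ) (hα : 0 < α) :
    ∃ c : ℝ, 0 < c ∧ ∃ N₀ : ℕ, ∀ n : ℕ, N₀ ≤ n → ∀ k : ℕ, 1 < k → 4 * k ≤ n →
      ∀ P : Finset (Individual n), validPop (ojzj n k) P →
        (∀ x ∈ P, ojzj n k x ∈ paretoFront (ojzj n k)) →
        α * n ≤ (P.card : ℝ) →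
        (fun _ => false : Individual n) ∉ P →
        (fun _ => true : Individual n) ∉ P →
        ENNReal.ofReal (c * (n : ℝ) ^ (k + 1)) ≤
          ∑' t : ℕ,
            prob (run (semoStep (ojzj n k) stdBitMut) P t)
              {l | ∀ Q ∈ l, ¬ covers (ojzj n k) Q} := by
  refine ⟨α / 32, by positivity, ⌈16 / α⌉₊ + 2, ?_⟩
  intro n hn k hk hkn P hvalid hpar hcardP h0 h1
  have hn2 : 2 ≤ n := by omega
  have hn0 : 0 < n := by omega
  have h2k : 2 * k ≤ n := by omega
  have hk2 : 2 ≤ k := hk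
  have hαn : (16 : ℝ) ≤ α * n := by
    have hceil : (16 / α : ℝ) ≤ (⌈16 / α⌉₊ : ℝ) := Nat.le_ceil _
    have hnn : ((⌈16 / α⌉₊ + 2 : ℕ) : ℝ) ≤ (n : ℝ) := Nat.cast_le.2 hn
    have hna : (16 / α : ℝ) ≤ n := by push_cast at hnn; linarith
    calc (16 : ℝ) = α * (16 / α) := by field_simp
      _ ≤ α * n := mul_le_mul_of_nonneg_left hna (le_of_lt hα)
  set m₀ := P.card with hm₀
  have hInvP : Inv n k m₀ P := initial_inv hk hkn hvalid hpar h0 h1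
  have h16m : (16 : ℝ) ≤ (m₀ : ℝ) := le_trans hαn hcardP
  have hm1 : 1 ≤ m₀ := by exact_mod_cast le_trans (by norm_num : (1:ℝ) ≤ 16) h16m
  set r : ℝ≥0∞ := ((n : ℝ≥0∞))⁻¹ with hr
  set p₀ : ℝ≥0∞ := (m₀ : ℝ≥0∞)⁻¹ * (4 * r ^ k) with hp₀
  have hstep : ∀ Q : Finset (Individual n), Inv n k m₀ Q →
      prob (semoStep (ojzj n k) stdBitMut Q) {Q' | ¬ Inv n k m₀ Q'} ≤ p₀ :=
    fun Q hQ => semoStep_bad_le (by omega) h2k hn2 hm1 hQ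
  set M := ⌊α * n / 8⌋₊ with hM
  set T := M * n ^ k with hT
  have h8M : 8 * M ≤ m₀ := by
    have hfl : (M : ℝ) ≤ α * n / 8 := Nat.floor_le (by positivity)
    have h8 : ((8 * M : ℕ) : ℝ) ≤ (m₀ : ℝ) := by push_cast; linarith
    exact_mod_cast h8
  have hm0ne : (m₀ : ℝ≥0∞) ≠ 0 := Nat.cast_ne_zero.2 (by omega)
  have hm0top : (m₀ : ℝ≥0∞) ≠ ⊤ := ENNReal.natCast_ne_top m₀
  have hnkne : ((n : ℝ≥0∞)) ^ k ≠ 0 := pow_ne_zero k (Nat.cast_ne_zero.2 (by omega))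
  have hnktop : ((n : ℝ≥0∞)) ^ k ≠ ⊤ := ENNReal.pow_ne_top (ENNReal.natCast_ne_top n)
  have hTp : (T : ℝ≥0∞) * p₀ ≤ 2⁻¹ := by
    have hTcast : (T : ℝ≥0∞) = (M : ℝ≥0∞) * ((n : ℝ≥0∞)) ^ k := by
      rw [hT]; push_cast; ring
    have hrk : r ^ k = (((n : ℝ≥0∞)) ^ k)⁻¹ := by rw [hr, ← ENNReal.inv_pow]
    have hcalc : (T : ℝ≥0∞) * p₀ = (4 * M) * (m₀ : ℝ≥0∞)⁻¹ := by
      rw [hTcast, hp₀, hrk]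
      calc (M : ℝ≥0∞) * (n : ℝ≥0∞) ^ k * ((m₀ : ℝ≥0∞)⁻¹ * (4 * ((n : ℝ≥0∞) ^ k)⁻¹))
          = (4 * M) * (m₀ : ℝ≥0∞)⁻¹ * ((n : ℝ≥0∞) ^ k * ((n : ℝ≥0∞) ^ k)⁻¹) := by ring
        _ = (4 * M) * (m₀ : ℝ≥0∞)⁻¹ := by rw [ENNReal.mul_inv_cancel hnkne hnktop, mul_one]
    rw [hcalc]
    have h4M2 : (4 * (M : ℝ≥0∞)) * 2 ≤ (m₀ : ℝ≥0∞) := by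
      calc (4 * (M : ℝ≥0∞)) * 2 = ((8 * M : ℕ) : ℝ≥0∞) := by push_cast; ring
        _ ≤ (m₀ : ℝ≥0∞) := Nat.cast_le.2 h8M
    have h22 : (2 : ℝ≥0∞) * 2⁻¹ = 1 := ENNReal.mul_inv_cancel (by norm_num) (by norm_num)
    have h4M : (4 * (M : ℝ≥0∞)) ≤ (m₀ : ℝ≥0∞) * 2⁻¹ := by
      calc (4 * (M : ℝ≥0∞)) = (4 * (M : ℝ≥0∞)) * (2 * 2⁻¹) := by rw [h22, mul_one]
        _ = ((4 * (M : ℝ≥0∞)) * 2) * 2⁻¹ := by ring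
        _ ≤ (m₀ : ℝ≥0∞) * 2⁻¹ := mul_le_mul_left h4M2 _
    calc (4 * (M : ℝ≥0∞)) * (m₀ : ℝ≥0∞)⁻¹ ≤ ((m₀ : ℝ≥0∞) * 2⁻¹) * (m₀ : ℝ≥0∞)⁻¹ :=
          mul_le_mul_left h4M _
      _ = 2⁻¹ * ((m₀ : ℝ≥0∞) * (m₀ : ℝ≥0∞)⁻¹) := by ring
      _ = 2⁻¹ := by rw [ENNReal.mul_inv_cancel hm0ne hm0top, mul_one]
  have hterm : ∀ t : ℕ, t ≤ T → 2⁻¹ ≤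
      prob (run (semoStep (ojzj n k) stdBitMut) P t)
        {l | ∀ Q ∈ l, ¬ covers (ojzj n k) Q} := by
    intro t ht
    have hrun := run_inv_ge hInvP p₀ hstep t
    have hsubC : {l : List (Finset (Individual n)) | l ≠ [] ∧ ∀ Q ∈ l, Inv n k m₀ Q}
        ⊆ {l | ∀ Q ∈ l, ¬ covers (ojzj n k) Q} := by
      intro l hl Q hQ
      exact inv_not_covers hk2 h2k hn0 hm1 (hl.2 Q hQ)
    have hmono := (run (semoStep (ojzj n k) stdBitMut) P t).toOuterMeasure.mono hsubC
    have h12 : (2 : ℝ≥0∞)⁻¹ ≤ 1 - t * p₀ := by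
      have htp : (t : ℝ≥0∞) * p₀ ≤ 2⁻¹ :=
        le_trans (mul_le_mul_left (Nat.cast_le.2 ht) _) hTp
      calc (2 : ℝ≥0∞)⁻¹ = 1 - 2⁻¹ := by
            rw [← ENNReal.inv_two_add_inv_two, ENNReal.add_sub_cancel_right (by norm_num)]
        _ ≤ 1 - t * p₀ := tsub_le_tsub_left htp 1
    exact le_trans h12 (le_trans hrun hmono)
  have hsum : (T : ℝ≥0∞) * 2⁻¹ ≤ ∑' t : ℕ,
      prob (run (semoStep (ojzj n k) stdBitMut) P t)
        {l | ∀ Q ∈ l, ¬ covers (ojzj n k) Q} := by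
    calc (T : ℝ≥0∞) * 2⁻¹ = ∑ _t ∈ Finset.range T, (2 : ℝ≥0∞)⁻¹ := by
          rw [Finset.sum_const, Finset.card_range, nsmul_eq_mul]
      _ ≤ ∑ t ∈ Finset.range T, prob (run (semoStep (ojzj n k) stdBitMut) P t)
            {l | ∀ Q ∈ l, ¬ covers (ojzj n k) Q} :=
          Finset.sum_le_sum fun t ht => hterm t (le_of_lt (Finset.mem_range.1 ht))
      _ ≤ _ := ENNReal.sum_le_tsum _
  refine le_trans ?_ hsum
  have hM16 : α * n / 16 ≤ (M : ℝ) := by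
    have hlt : α * n / 8 - 1 < (M : ℝ) := Nat.sub_one_lt_floor _
    linarith
  have hreal : α / 32 * (n : ℝ) ^ (k + 1) ≤ (T : ℝ) / 2 := by
    have hTr : (T : ℝ) = (M : ℝ) * (n : ℝ) ^ k := by rw [hT]; push_cast; ring
    have hnk : (0 : ℝ) ≤ (n : ℝ) ^ k := by positivity
    rw [hTr]
    have hkey : (α * n / 16) * (n : ℝ) ^ k ≤ (M : ℝ) * (n : ℝ) ^ k :=
      mul_le_mul_of_nonneg_right hM16 hnk
    calc α / 32 * (n : ℝ) ^ (k + 1) = (α * n / 16) * (n : ℝ) ^ k / 2 := by ring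
      _ ≤ (M : ℝ) * (n : ℝ) ^ k / 2 := by linarith
  calc ENNReal.ofReal (α / 32 * (n : ℝ) ^ (k + 1)) ≤ ENNReal.ofReal ((T : ℝ) / 2) :=
        ENNReal.ofReal_le_ofReal hreal
    _ = (T : ℝ≥0∞) * 2⁻¹ := by
        rw [ENNReal.ofReal_div_of_pos (by norm_num), ENNReal.ofReal_natCast, div_eq_mul_inv]
        norm_num

end GSEMOPaper
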